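/- For every x ∈ ℝ one has Q₀(x) := ψ(x)·ψ''(x) − (ψ'(x))² > 0. -/

import Mathlib

noncomputable section

open MeasureTheory

/-- The increasing fundamental solution `ψ` of the Ornstein–Uhlenbeck resolvent equation:
`ψ(x) = (1/Γ(ρ/k)) ∫₀^∞ t^{ρ/k − 1} exp(−t²/2 + ((x − μ)√(2k)/σ) t) dt`. -/
def psi (ρ k σ μ : ℝ) (x : ℝ) : ℝ :=
  (1 / Real.Gamma (ρ / k)) *
    ∫ t in Set.Ioi (0 : ℝ),
      t ^ (ρ / k - 1) * Real.exp (-t ^ 2 / 2 + ((x - μ) * Real.sqrt (2 * k) / σ) * t)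

namespace Stmt10Aux

open Set Real

/-- The basic parametric integral. -/
def Jint (p b : ℝ) : ℝ :=
  ∫ t in Set.Ioi (0 : ℝ), t ^ p * Real.exp (-t ^ 2 / 2 + b * t)

lemma f_meas (p b : ℝ) : Measurable (fun t : ℝ => t ^ p * Real.exp (-t ^ 2 / 2 + b * t)) := by
  fun_prop

lemma f_intOn {p : ℝ} (hp : -1 < p) (b : ℝ) :
    IntegrableOn (fun t : ℝ => t ^ p * Real.exp (-t ^ 2 / 2 + b * t)) (Ioi 0) := by
  have hb : (0:ℝ) < 1/4 := by norm_num
  have hg := (integrableOn_rpow_mul_exp_neg_mul_sq hb hp).const_mul (Real.exp (b^2))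
  apply Integrable.mono' hg (f_meas p b).aestronglyMeasurable
  filter_upwards [ae_restrict_mem measurableSet_Ioi] with t ht
  have ht' : (0:ℝ) < t := ht
  rw [Real.norm_eq_abs, abs_mul, abs_of_nonneg (rpow_nonneg ht'.le p),
    abs_of_nonneg (exp_pos _).le]
  have h1 : -t ^ 2 / 2 + b * t ≤ b ^ 2 + (-(1/4) * t ^ 2) := by nlinarith [sq_nonneg (b - t/2)]
  calc t ^ p * Real.exp (-t ^ 2 / 2 + b * t)
      ≤ t ^ p * Real.exp (b ^ 2 + (-(1/4) * t ^ 2)) :=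
        mul_le_mul_of_nonneg_left (exp_le_exp.mpr h1) (rpow_nonneg ht'.le p)
    _ = Real.exp (b ^ 2) * (t ^ p * Real.exp (-(1/4) * t ^ 2)) := by
        rw [Real.exp_add]; ring

lemma Jint_pos {p : ℝ} (hp : -1 < p) (b : ℝ) : 0 < Jint p b := by
  rw [Jint, setIntegral_pos_iff_support_of_nonneg_ae]
  · refine lt_of_lt_of_le ?_ (measure_mono (s := Ioi (0:ℝ)) ?_)
    · simp [Real.volume_Ioi]
    · intro t ht
      refine ⟨?_, ht⟩
      have ht' : (0:ℝ) < t := ht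
      exact ne_of_gt (mul_pos (rpow_pos_of_pos ht' p) (exp_pos _))
  · filter_upwards [ae_restrict_mem measurableSet_Ioi] with t ht
    exact mul_nonneg (rpow_nonneg (le_of_lt ht) p) (exp_pos _).le
  · exact f_intOn hp b

/-- Differentiation under the integral sign. -/
lemma hasDerivAt_Jint {p : ℝ} (hp : -1 < p) {s : ℝ} (hs : 0 < s) (μc x : ℝ) :
    HasDerivAt (fun y => Jint p (s * (y - μc))) (s * Jint (p + 1) (s * (x - μc))) x := by
  have hp1 : (-1:ℝ) < p + 1 := by linarith
  have key := hasDerivAt_integral_of_dominated_loc_of_deriv_le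
    (μ := volume.restrict (Ioi (0:ℝ)))
    (F := fun y t => t ^ p * Real.exp (-t ^ 2 / 2 + (s * (y - μc)) * t))
    (F' := fun y t => s * (t ^ (p + 1) * Real.exp (-t ^ 2 / 2 + (s * (y - μc)) * t)))
    (x₀ := x) (s := Metric.ball x 1) (bound := fun t =>
      s * (t ^ (p + 1) * Real.exp (-t ^ 2 / 2 + (s * (x + 1 - μc)) * t)))
    (Metric.ball_mem_nhds x one_pos)
    (Filter.Eventually.of_forall fun y => (f_meas p _).aestronglyMeasurable)
    (f_intOn hp _)
    ((f_meas (p+1) _).const_mul s).aestronglyMeasurable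
    ?_ ((f_intOn hp1 (s * (x + 1 - μc))).const_mul s) ?_
  · have := key.2
    simp only [Jint, MeasureTheory.integral_const_mul] at this ⊢
    exact this
  · filter_upwards [ae_restrict_mem measurableSet_Ioi] with t ht y hy
    have ht' : (0:ℝ) < t := ht
    have hnn : 0 ≤ s * (t ^ (p+1) * Real.exp (-t ^ 2 / 2 + (s * (y - μc)) * t)) :=
      mul_nonneg hs.le (mul_nonneg (rpow_nonneg ht'.le _) (exp_pos _).le)
    rw [Real.norm_eq_abs, abs_of_nonneg hnn]
    have hyx : y ≤ x + 1 := by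
      have := Metric.mem_ball.mp hy
      rw [Real.dist_eq] at this
      have := abs_lt.mp this
      linarith [this.1, this.2]
    have harg : -t ^ 2 / 2 + (s * (y - μc)) * t ≤ -t ^ 2 / 2 + (s * (x + 1 - μc)) * t := by
      have : s * (y - μc) * t ≤ s * (x + 1 - μc) * t := by
        apply mul_le_mul_of_nonneg_right _ ht'.le
        exact mul_le_mul_of_nonneg_left (by linarith) hs.le
      linarith
    exact mul_le_mul_of_nonneg_left
      (mul_le_mul_of_nonneg_left (exp_le_exp.mpr harg) (rpow_nonneg ht'.le _)) hs.le
  · filter_upwards [ae_restrict_mem measurableSet_Ioi] with t ht y hy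
    have ht' : (0:ℝ) < t := ht
    have h0 : HasDerivAt (fun y : ℝ => -t ^ 2 / 2 + (s * (y - μc)) * t) (s * t) y := by
      have := ((((hasDerivAt_id y).sub_const μc).const_mul s).mul_const t).const_add
        (-t ^ 2 / 2)
      simpa using this
    have h1 := (h0.exp.const_mul (t ^ p))
    refine h1.congr_deriv ?_
    rw [Real.rpow_add_one (ne_of_gt ht')]
    ring

end Stmt10Aux

open Stmt10Aux Set Real in
/-- For every `x ∈ ℝ`, `Q₀(x) := ψ(x)ψ''(x) − (ψ'(x))² > 0`. -/
theorem stmt10 (ρ k σ μ : ℝ) (hρ : 0 < ρ) (hk : 0 < k) (hσ : 0 < σ) (x : ℝ) :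
    0 < psi ρ k σ μ x * deriv (deriv (psi ρ k σ μ)) x - (deriv (psi ρ k σ μ) x) ^ 2 := by
  set a : ℝ := ρ / k with ha
  have ha0 : 0 < a := div_pos hρ hk
  have hpa : (-1:ℝ) < a - 1 := by linarith
  have hpa1 : (-1:ℝ) < a := by linarith
  have hpa2 : (-1:ℝ) < a + 1 := by linarith
  set s : ℝ := Real.sqrt (2 * k) / σ with hsdef
  have hs : 0 < s := div_pos (Real.sqrt_pos.mpr (by linarith)) hσ
  set c : ℝ := 1 / Real.Gamma a with hc
  have hc0 : 0 < c := by
    rw [hc, one_div]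
    exact inv_pos.mpr (Real.Gamma_pos_of_pos ha0)
  -- rewrite psi
  have hpsi : psi ρ k σ μ = fun y => c * Jint (a - 1) (s * (y - μ)) := by
    funext y
    rw [psi, Jint]
    congr 2
    funext t
    congr 2
    rw [hsdef]
    ring
  -- first derivative
  have hd1 : ∀ y, HasDerivAt (psi ρ k σ μ) (c * (s * Jint a (s * (y - μ)))) y := by
    intro y
    rw [hpsi]
    have := (hasDerivAt_Jint hpa hs μ y).const_mul c
    simpa using this
  have hderiv1 : deriv (psi ρ k σ μ) = fun y => c * (s * Jint a (s * (y - μ))) := by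
    funext y; exact (hd1 y).deriv
  have hd2 : ∀ y, HasDerivAt (deriv (psi ρ k σ μ))
      (c * (s * (s * Jint (a + 1) (s * (y - μ))))) y := by
    intro y
    rw [hderiv1]
    exact ((hasDerivAt_Jint hpa1 hs μ y).const_mul s).const_mul c
  have hderiv2 : deriv (deriv (psi ρ k σ μ)) x = c * (s * (s * Jint (a + 1) (s * (x - μ)))) :=
    (hd2 x).deriv
  set b : ℝ := s * (x - μ) with hb
  set A : ℝ := Jint (a - 1) b with hA
  set B : ℝ := Jint a b with hB
  set C : ℝ := Jint (a + 1) b with hC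
  have hA0 : 0 < A := Jint_pos hpa b
  -- key strict inequality: A * C - B ^ 2 > 0
  have hkey : B ^ 2 < A * C := by
    set lam : ℝ := B / A with hlam
    have hint : ∀ t ∈ Ioi (0:ℝ),
        (t - lam) ^ 2 * (t ^ (a - 1) * Real.exp (-t ^ 2 / 2 + b * t)) =
        t ^ (a + 1) * Real.exp (-t ^ 2 / 2 + b * t)
          + ((-(2 * lam)) * (t ^ a * Real.exp (-t ^ 2 / 2 + b * t))
          + lam ^ 2 * (t ^ (a - 1) * Real.exp (-t ^ 2 / 2 + b * t))) := by
      intro t ht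
      have ht' : (0:ℝ) < t := ht
      have h1 : t ^ (a - 1) * t = t ^ a := by
        rw [← Real.rpow_add_one (ne_of_gt ht')]; norm_num
      have h2 : t ^ (a - 1) * t ^ 2 = t ^ (a + 1) := by
        rw [← Real.rpow_two, ← Real.rpow_add ht']; congr 1; ring
      rw [← h1, ← h2]; ring
    have hi0 := f_intOn hpa b
    have hi1 := f_intOn hpa1 b
    have hi2 := f_intOn hpa2 b
    have hintEq : (∫ t in Ioi (0:ℝ),
        (t - lam) ^ 2 * (t ^ (a - 1) * Real.exp (-t ^ 2 / 2 + b * t))) =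
        C + ((-(2 * lam)) * B + lam ^ 2 * A) := by
      have hsum : IntegrableOn (fun t : ℝ =>
          -(2 * lam) * (t ^ a * Real.exp (-t ^ 2 / 2 + b * t))
            + lam ^ 2 * (t ^ (a - 1) * Real.exp (-t ^ 2 / 2 + b * t))) (Ioi 0) :=
        (hi1.const_mul (-(2 * lam))).add (hi0.const_mul (lam ^ 2))
      rw [setIntegral_congr_fun measurableSet_Ioi hint,
        integral_add hi2 hsum,
        integral_add (hi1.const_mul (-(2 * lam))) (hi0.const_mul (lam ^ 2)),
        MeasureTheory.integral_const_mul, MeasureTheory.integral_const_mul]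
      simp only [hA, hB, hC, Jint]
    have hpos : 0 < ∫ t in Ioi (0:ℝ),
        (t - lam) ^ 2 * (t ^ (a - 1) * Real.exp (-t ^ 2 / 2 + b * t)) := by
      rw [setIntegral_pos_iff_support_of_nonneg_ae]
      · refine lt_of_lt_of_le ?_ (measure_mono (s := Ioi (|lam| + 1)) ?_)
        · simp [Real.volume_Ioi]
        · intro t ht
          have ht1 : (0:ℝ) < t := lt_of_le_of_lt (by positivity) ht
          have htlam : t ≠ lam := by
            intro h
            rw [h] at ht
            have ht2 : |lam| + 1 < lam := ht
            have := le_abs_self lam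
            linarith
          constructor
          · apply ne_of_gt
            apply mul_pos
            · have : t - lam ≠ 0 := sub_ne_zero.mpr htlam
              positivity
            · exact mul_pos (rpow_pos_of_pos ht1 _) (exp_pos _)
          · exact ht1
      · filter_upwards [ae_restrict_mem measurableSet_Ioi] with t ht
        have ht' : (0:ℝ) < t := ht
        positivity
      · -- integrability via congruence
        apply IntegrableOn.congr_fun
          (hi2.add ((hi1.const_mul _).add (hi0.const_mul _)))
          (fun t ht => (hint t ht).symm) measurableSet_Ioi
    rw [hintEq] at hpos
    have hlam' : lam * A = B := by
      rw [hlam]; field_simp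
    nlinarith [hpos, hA0]
  -- conclude
  have hval : psi ρ k σ μ x = c * A := by simp only [hpsi]; rfl
  have hd1x : deriv (psi ρ k σ μ) x = c * (s * B) := by rw [(hd1 x).deriv]
  rw [hval, hd1x, hderiv2]
  have : c * A * (c * (s * (s * C))) - (c * (s * B)) ^ 2
      = c ^ 2 * s ^ 2 * (A * C - B ^ 2) := by ring
  rw [this]
  have : 0 < A * C - B ^ 2 := by linarith
  positivity
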